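/- Then the function F̃₄(x,w) := [ ((f+g)·E^{−1/2} + (f−g)·E^{1/2})/2 · F^{1/2} ] evaluated at the point (2^{2/3} x, 2^{1/3} w) satisfies the linear PDE ∂F̃₄/∂x + (1/2)·∂²F̃₄/∂w² + (x − w²)·∂F̃₄/∂w = 0 at every point (x,w) ∈ ℝ². (This is the PDE from the β = 4 characterization of the deformed Tracy–Widom laws, satisfied by the Painlevé II expression for F_{4,w}.) -/

import Mathlib

open MeasureTheory Set Filter

/-- The Painlevé II expression
`F̃₄(x,w) = [((f+g)E^{−1/2} + (f−g)E^{1/2})/2 · F^{1/2}]` evaluated at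
`(2^{2/3}x, 2^{1/3}w)` satisfies the `β = 4` PDE
`∂F̃₄/∂x + (1/2)∂²F̃₄/∂w² + (x − w²)∂F̃₄/∂w = 0` on all of `ℝ²`. -/
theorem stmt_17 (u u' v E F : ℝ → ℝ) (f g : ℝ → ℝ → ℝ)
    (hu : ∀ x, HasDerivAt u (u' x) x) (hu'c : Continuous u')
    (hvint : ∀ x : ℝ, Integrable (fun t => u t ^ 2) (volume.restrict (Ioi x)))
    (hv : ∀ x : ℝ, v x = ∫ t in Ioi x, u t ^ 2)
    (hfi : ∀ x : ℝ, v x + u x ^ 4 - u' x ^ 2 + x * u x ^ 2 = 0)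
    (hEpos : ∀ x, 0 < E x) (hFpos : ∀ x, 0 < F x)
    (hE : ∀ x, HasDerivAt E (u x * E x) x)
    (hF : ∀ x, HasDerivAt F (v x * F x) x)
    (hfw : ∀ x w : ℝ, HasDerivAt (fun w' => f x w')
      (u x ^ 2 * f x w - (w * u x + u' x) * g x w) w)
    (hgw : ∀ x w : ℝ, HasDerivAt (fun w' => g x w')
      ((-w * u x + u' x) * f x w + (w ^ 2 - x - u x ^ 2) * g x w) w)
    (hfx : ∀ x w : ℝ, HasDerivAt (fun x' => f x' w) (u x * g x w) x)
    (hgx : ∀ x w : ℝ, HasDerivAt (fun x' => g x' w) (u x * f x w - w * g x w) x)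
    (F4 : ℝ → ℝ → ℝ)
    (hF4 : ∀ x w : ℝ, F4 x w =
      ((f (2 ^ ((2:ℝ)/3) * x) (2 ^ ((1:ℝ)/3) * w) + g (2 ^ ((2:ℝ)/3) * x) (2 ^ ((1:ℝ)/3) * w))
          / Real.sqrt (E (2 ^ ((2:ℝ)/3) * x))
        + (f (2 ^ ((2:ℝ)/3) * x) (2 ^ ((1:ℝ)/3) * w) - g (2 ^ ((2:ℝ)/3) * x) (2 ^ ((1:ℝ)/3) * w))
          * Real.sqrt (E (2 ^ ((2:ℝ)/3) * x))) / 2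
        * Real.sqrt (F (2 ^ ((2:ℝ)/3) * x))) :
    ∀ x w : ℝ,
      deriv (fun x' => F4 x' w) x
      + (1 / 2) * deriv (fun w' => deriv (fun w'' => F4 x w'') w') w
      + (x - w ^ 2) * deriv (fun w' => F4 x w') w = 0 := by
  intro x w
  set B : ℝ := 2 ^ ((1:ℝ)/3) with hBdef
  have hA : (2:ℝ) ^ ((2:ℝ)/3) = B ^ 2 := by
    rw [hBdef, ← Real.rpow_natCast ((2:ℝ) ^ ((1:ℝ)/3)) 2, ← Real.rpow_mul (by norm_num)]
    norm_num
  have hB3 : B ^ 3 = 2 := by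
    rw [hBdef, ← Real.rpow_natCast ((2:ℝ) ^ ((1:ℝ)/3)) 3, ← Real.rpow_mul (by norm_num)]
    norm_num
  have hF4' : ∀ x' w'' : ℝ, F4 x' w'' =
      ((f (B ^ 2 * x') (B * w'') + g (B ^ 2 * x') (B * w'')) / Real.sqrt (E (B ^ 2 * x'))
        + (f (B ^ 2 * x') (B * w'') - g (B ^ 2 * x') (B * w'')) * Real.sqrt (E (B ^ 2 * x')))
        / 2 * Real.sqrt (F (B ^ 2 * x')) := by
    intro x' w''
    rw [hF4 x' w'', hA]
  set X : ℝ := B ^ 2 * x with hX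
  have hEne : E X ≠ 0 := (hEpos X).ne'
  have hFne : F X ≠ 0 := (hFpos X).ne'
  have hsEne : Real.sqrt (E X) ≠ 0 := (Real.sqrt_pos.2 (hEpos X)).ne'
  have hsFne : Real.sqrt (F X) ≠ 0 := (Real.sqrt_pos.2 (hFpos X)).ne'
  have hsE2 : Real.sqrt (E X) ^ 2 = E X := Real.sq_sqrt (hEpos X).le
  have hsF2 : Real.sqrt (F X) ^ 2 = F X := Real.sq_sqrt (hFpos X).le
  have hinvE : Real.sqrt (E X) * (Real.sqrt (E X))⁻¹ = 1 := mul_inv_cancel₀ hsEne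
  have hinvF : Real.sqrt (F X) * (Real.sqrt (F X))⁻¹ = 1 := mul_inv_cancel₀ hsFne
  have hfiX := hfi X
  have hlin : ∀ t : ℝ, HasDerivAt (fun s : ℝ => B * s) B t := fun t => by
    simpa using (hasDerivAt_id t).const_mul B
  have hlin2 : HasDerivAt (fun x' : ℝ => B ^ 2 * x') (B ^ 2) x := by
    simpa using (hasDerivAt_id x).const_mul (B ^ 2)
  -- first w-derivative
  have hD1 : ∀ w' : ℝ, HasDerivAt (fun w'' : ℝ => ((f X (B * w'') + g X (B * w'')) / Real.sqrt (E X) + (f X (B * w'') - g X (B * w'')) * Real.sqrt (E X)) / 2 * Real.sqrt (F X))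
      ((((u X ^ 2 * f X (B * w') - (B * w' * u X + u' X) * g X (B * w')) * B + ((-(B * w') * u X + u' X) * f X (B * w') + ((B * w') ^ 2 - X - u X ^ 2) * g X (B * w')) * B) / Real.sqrt (E X) + ((u X ^ 2 * f X (B * w') - (B * w' * u X + u' X) * g X (B * w')) * B - ((-(B * w') * u X + u' X) * f X (B * w') + ((B * w') ^ 2 - X - u X ^ 2) * g X (B * w')) * B) * Real.sqrt (E X)) / 2 * Real.sqrt (F X)) w' := by
    intro w'
    have hfB : HasDerivAt (fun w'' : ℝ => f X (B * w''))
        ((u X ^ 2 * f X (B * w') - (B * w' * u X + u' X) * g X (B * w')) * B) w' := (hfw X (B * w')).comp w' (hlin w')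
    have hgB : HasDerivAt (fun w'' : ℝ => g X (B * w''))
        (((-(B * w') * u X + u' X) * f X (B * w') + ((B * w') ^ 2 - X - u X ^ 2) * g X (B * w')) * B) w' := (hgw X (B * w')).comp w' (hlin w')
    exact ((((hfB.add hgB).div_const (Real.sqrt (E X))).add
      ((hfB.sub hgB).mul_const (Real.sqrt (E X)))).div_const 2).mul_const (Real.sqrt (F X))
  have hfun2 : (fun w'' : ℝ => F4 x w'') = (fun w'' : ℝ => ((f X (B * w'') + g X (B * w'')) / Real.sqrt (E X) + (f X (B * w'') - g X (B * w'')) * Real.sqrt (E X)) / 2 * Real.sqrt (F X)) :=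
    funext fun w'' => hF4' x w''
  have hd1 : ∀ w' : ℝ, deriv (fun w'' => F4 x w'') w' = (((u X ^ 2 * f X (B * w') - (B * w' * u X + u' X) * g X (B * w')) * B + ((-(B * w') * u X + u' X) * f X (B * w') + ((B * w') ^ 2 - X - u X ^ 2) * g X (B * w')) * B) / Real.sqrt (E X) + ((u X ^ 2 * f X (B * w') - (B * w' * u X + u' X) * g X (B * w')) * B - ((-(B * w') * u X + u' X) * f X (B * w') + ((B * w') ^ 2 - X - u X ^ 2) * g X (B * w')) * B) * Real.sqrt (E X)) / 2 * Real.sqrt (F X) := by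
    intro w'
    rw [hfun2]
    exact (hD1 w').deriv
  -- second w-derivative
  have hfB' : HasDerivAt (fun w' : ℝ => f X (B * w'))
      ((u X ^ 2 * f X (B * w) - (B * w * u X + u' X) * g X (B * w)) * B) w := (hfw X (B * w)).comp w (hlin w)
  have hgB' : HasDerivAt (fun w' : ℝ => g X (B * w'))
      (((-(B * w) * u X + u' X) * f X (B * w) + ((B * w) ^ 2 - X - u X ^ 2) * g X (B * w)) * B) w := (hgw X (B * w)).comp w (hlin w)
  have h1 : HasDerivAt (fun w' : ℝ => B * w' * u X + u' X) (B * u X) w :=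
    ((hlin w).mul_const (u X)).add_const (u' X)
  have h2 : HasDerivAt (fun w' : ℝ => -(B * w') * u X + u' X) (-B * u X) w :=
    (((hlin w).neg).mul_const (u X)).add_const (u' X)
  have h3 : HasDerivAt (fun w' : ℝ => (B * w') ^ 2 - X - u X ^ 2) (2 * (B * w) * B) w := by
    simpa using (((hlin w).pow 2).sub_const X).sub_const (u X ^ 2)
  have hPf : HasDerivAt (fun w' : ℝ => (u X ^ 2 * f X (B * w') - (B * w' * u X + u' X) * g X (B * w')) * B)
      ((u X ^ 2 * ((u X ^ 2 * f X (B * w) - (B * w * u X + u' X) * g X (B * w)) * B) - (B * u X * g X (B * w)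
        + (B * w * u X + u' X) * (((-(B * w) * u X + u' X) * f X (B * w) + ((B * w) ^ 2 - X - u X ^ 2) * g X (B * w)) * B))) * B) w :=
    ((hfB'.const_mul (u X ^ 2)).sub (h1.mul hgB')).mul_const B
  have hQg : HasDerivAt (fun w' : ℝ => ((-(B * w') * u X + u' X) * f X (B * w') + ((B * w') ^ 2 - X - u X ^ 2) * g X (B * w')) * B)
      ((-B * u X * f X (B * w) + (-(B * w) * u X + u' X) * ((u X ^ 2 * f X (B * w) - (B * w * u X + u' X) * g X (B * w)) * B)
        + (2 * (B * w) * B * g X (B * w)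
          + ((B * w) ^ 2 - X - u X ^ 2) * (((-(B * w) * u X + u' X) * f X (B * w) + ((B * w) ^ 2 - X - u X ^ 2) * g X (B * w)) * B))) * B) w :=
    ((h2.mul hfB').add (h3.mul hgB')).mul_const B
  have hD2 : HasDerivAt (fun w' : ℝ => (((u X ^ 2 * f X (B * w') - (B * w' * u X + u' X) * g X (B * w')) * B + ((-(B * w') * u X + u' X) * f X (B * w') + ((B * w') ^ 2 - X - u X ^ 2) * g X (B * w')) * B) / Real.sqrt (E X) + ((u X ^ 2 * f X (B * w') - (B * w' * u X + u' X) * g X (B * w')) * B - ((-(B * w') * u X + u' X) * f X (B * w') + ((B * w') ^ 2 - X - u X ^ 2) * g X (B * w')) * B) * Real.sqrt (E X)) / 2 * Real.sqrt (F X)) _ w :=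
    ((((hPf.add hQg).div_const (Real.sqrt (E X))).add
      ((hPf.sub hQg).mul_const (Real.sqrt (E X)))).div_const 2).mul_const (Real.sqrt (F X))
  -- x-derivative
  have hfXd : HasDerivAt (fun x' : ℝ => f (B ^ 2 * x') (B * w))
      (u X * g X (B * w) * B ^ 2) x := (hfx X (B * w)).comp x hlin2
  have hgXd : HasDerivAt (fun x' : ℝ => g (B ^ 2 * x') (B * w))
      ((u X * f X (B * w) - B * w * g X (B * w)) * B ^ 2) x := (hgx X (B * w)).comp x hlin2
  have hEX : HasDerivAt (fun x' : ℝ => E (B ^ 2 * x')) (u X * E X * B ^ 2) x :=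
    (hE X).comp x hlin2
  have hFX : HasDerivAt (fun x' : ℝ => F (B ^ 2 * x')) (v X * F X * B ^ 2) x :=
    (hF X).comp x hlin2
  have hsEX : HasDerivAt (fun x' : ℝ => Real.sqrt (E (B ^ 2 * x')))
      (1 / (2 * Real.sqrt (E X)) * (u X * E X * B ^ 2)) x :=
    (Real.hasDerivAt_sqrt hEne).comp x hEX
  have hsFX : HasDerivAt (fun x' : ℝ => Real.sqrt (F (B ^ 2 * x')))
      (1 / (2 * Real.sqrt (F X)) * (v X * F X * B ^ 2)) x :=
    (Real.hasDerivAt_sqrt hFne).comp x hFX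
  have hfun1 : (fun x' : ℝ => F4 x' w) = (fun x' : ℝ => ((f (B ^ 2 * x') (B * w) + g (B ^ 2 * x') (B * w)) / Real.sqrt (E (B ^ 2 * x')) + (f (B ^ 2 * x') (B * w) - g (B ^ 2 * x') (B * w)) * Real.sqrt (E (B ^ 2 * x'))) / 2 * Real.sqrt (F (B ^ 2 * x'))) :=
    funext fun x' => hF4' x' w
  have hDx : HasDerivAt (fun x' : ℝ => ((f (B ^ 2 * x') (B * w) + g (B ^ 2 * x') (B * w)) / Real.sqrt (E (B ^ 2 * x')) + (f (B ^ 2 * x') (B * w) - g (B ^ 2 * x') (B * w)) * Real.sqrt (E (B ^ 2 * x'))) / 2 * Real.sqrt (F (B ^ 2 * x'))) _ x :=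
    ((((hfXd.add hgXd).div hsEX hsEne).add
      ((hfXd.sub hgXd).mul hsEX)).div_const 2).mul hsFX
  rw [hfun1, hDx.deriv]
  simp only [hd1]
  rw [hD2.deriv]
  beta_reduce
  simp only [Pi.add_apply, Pi.sub_apply, Pi.div_apply, Pi.mul_apply, ← hX]
  linear_combination ((1/4:ℝ) * (g X (B*w)) * (u X) * (Real.sqrt (E X))⁻¹ * (Real.sqrt (F X)) * B^2 + (1/4:ℝ) * (g X (B*w)) * (u X) * (Real.sqrt (E X))⁻¹^3 * (Real.sqrt (F X)) * B^2 + (-1/4:ℝ) * (f X (B*w)) * (u X) * (Real.sqrt (E X))⁻¹ * (Real.sqrt (F X)) * B^2 + (1/4:ℝ) * (f X (B*w)) * (u X) * (Real.sqrt (E X))⁻¹^3 * (Real.sqrt (F X)) * B^2) * hsE2 + ((-1/4:ℝ) * (g X (B*w)) * (v X) * (Real.sqrt (E X))⁻¹ * (Real.sqrt (F X))⁻¹ * B^2 + (1/4:ℝ) * (g X (B*w)) * (v X) * (Real.sqrt (E X)) * (Real.sqrt (F X))⁻¹ * B^2 + (-1/4:ℝ) * (f X (B*w)) * (v X) * (Real.sqrt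 (E X))⁻¹ * (Real.sqrt (F X))⁻¹ * B^2 + (-1/4:ℝ) * (f X (B*w)) * (v X) * (Real.sqrt (E X)) * (Real.sqrt (F X))⁻¹ * B^2) * hsF2 + ((1/4:ℝ) * (g X (B*w)) * (Real.sqrt (E X))⁻¹ * (Real.sqrt (F X))^2 * (Real.sqrt (F X))⁻¹ * B^2 + (-1/4:ℝ) * (g X (B*w)) * (Real.sqrt (E X)) * (Real.sqrt (F X))^2 * (Real.sqrt (F X))⁻¹ * B^2 + (1/4:ℝ) * (f X (B*w)) * (Real.sqrt (E X))⁻¹ * (Real.sqrt (F X))^2 * (Real.sqrt (F X))⁻¹ * B^2 + (1/4:ℝ) * (f X (B*w)) * (Real.sqrt (E X)) * (Real.sqrt (F X))^2 * (Real.sqrt (F X))⁻¹ * B^2) * hfiX + ((1/2:ℝ) * (g X (B*w)) * (Real.sqrt (E X))⁻¹ * (Real.sqrt (F X)) * B * w^2 + (-1/2:ℝ) * (g X (B*w)) * (Real.sqrt (E X))⁻¹ * (Real.sqrt (F X)) * B * x + (1/4:ℝ) * (g X (B*w)) * (Real.sqrt (E X))⁻¹ * (Real.sqrt (F X)) * B^2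 * X + (-1/2:ℝ) * (g X (B*w)) * (Real.sqrt (E X))⁻¹ * (Real.sqrt (F X)) * B^4 * w^2 + (1/4:ℝ) * (g X (B*w)) * (Real.sqrt (E X))⁻¹ * (Real.sqrt (F X)) * B^4 * x + (-1/2:ℝ) * (g X (B*w)) * (Real.sqrt (E X)) * (Real.sqrt (F X)) * B * w^2 + (1/2:ℝ) * (g X (B*w)) * (Real.sqrt (E X)) * (Real.sqrt (F X)) * B * x + (-1/4:ℝ) * (g X (B*w)) * (Real.sqrt (E X)) * (Real.sqrt (F X)) * B^2 * X + (1/2:ℝ) * (g X (B*w)) * (Real.sqrt (E X)) * (Real.sqrt (F X)) * B^4 * w^2 + (-1/4:ℝ) * (g X (B*w)) * (Real.sqrt (E X)) * (Real.sqrt (F X)) * B^4 * x + (1/4:ℝ) * (g X (B*w)) * (u' X) * (Real.sqrt (E X))⁻¹ * (Real.sqrt (F X)) * B^2 + (1/4:ℝ) * (g X (B*w)) * (u' X) * (Real.sqrt (E X)) * (Real.sqrt (F X)) * B^2 + (1/4:ℝ) * (g X (B*w)) * (u X) * (Real.sqrt (E X))⁻¹ * (Real.sqrt (F X)) * B^3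 * w + (1/4:ℝ) * (g X (B*w)) * (u X) * (Real.sqrt (E X)) * (Real.sqrt (F X)) * B^3 * w + (1/2:ℝ) * (g X (B*w)) * (u X)^2 * (Real.sqrt (E X))⁻¹ * (Real.sqrt (F X)) * B^2 + (-1/4:ℝ) * (g X (B*w)) * (u X)^2 * (Real.sqrt (E X))⁻¹ * (Real.sqrt (F X))^2 * (Real.sqrt (F X))⁻¹ * B^2 + (-1/2:ℝ) * (g X (B*w)) * (u X)^2 * (Real.sqrt (E X)) * (Real.sqrt (F X)) * B^2 + (1/4:ℝ) * (g X (B*w)) * (u X)^2 * (Real.sqrt (E X)) * (Real.sqrt (F X))^2 * (Real.sqrt (F X))⁻¹ * B^2 + (-1/4:ℝ) * (f X (B*w)) * (u' X) * (Real.sqrt (E X))⁻¹ * (Real.sqrt (F X)) * B^2 + (1/4:ℝ) * (f X (B*w)) * (u' X) * (Real.sqrt (E X)) * (Real.sqrt (F X)) * B^2 + (1/4:ℝ) * (f X (B*w)) * (u X) * (Real.sqrt (E X))⁻¹ * (Real.sqrt (F X)) * B^3 * w + (-1/4:ℝ) * (f X (B*w)) * (u X) * (Real.sqrt (E X)) *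 (Real.sqrt (F X)) * B^3 * w + (-1/4:ℝ) * (f X (B*w)) * (u X)^2 * (Real.sqrt (E X))⁻¹ * (Real.sqrt (F X))^2 * (Real.sqrt (F X))⁻¹ * B^2 + (-1/4:ℝ) * (f X (B*w)) * (u X)^2 * (Real.sqrt (E X)) * (Real.sqrt (F X))^2 * (Real.sqrt (F X))⁻¹ * B^2) * hX + ((1/2:ℝ) * (g X (B*w)) * (Real.sqrt (E X))⁻¹ * (Real.sqrt (F X)) * w + (1/4:ℝ) * (g X (B*w)) * (Real.sqrt (E X))⁻¹ * (Real.sqrt (F X)) * B^3 * w^4 + (-1/2:ℝ) * (g X (B*w)) * (Real.sqrt (E X))⁻¹ * (Real.sqrt (F X)) * B^3 * x * w^2 + (1/4:ℝ) * (g X (B*w)) * (Real.sqrt (E X))⁻¹ * (Real.sqrt (F X)) * B^3 * x^2 + (-1/4:ℝ) * (g X (B*w)) * (Real.sqrt (E X)) * (Real.sqrt (F X)) * B^3 * w^4 + (1/2:ℝ) * (g X (B*w)) * (Real.sqrt (E X)) * (Real.sqrt (F X)) * B^3 * x * w^2 + (-1/4:ℝ) * (g X (B*w)) * (Real.sqrt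 (E X)) * (Real.sqrt (F X)) * B^3 * x^2 + (-1/2:ℝ) * (g X (B*w)) * (Real.sqrt (E X)) * (Real.sqrt (E X))⁻¹^2 * (Real.sqrt (F X)) * w + (-1/4:ℝ) * (g X (B*w)) * (u' X) * (Real.sqrt (E X))⁻¹ * (Real.sqrt (F X)) * B * w^2 + (1/4:ℝ) * (g X (B*w)) * (u' X) * (Real.sqrt (E X))⁻¹ * (Real.sqrt (F X)) * B * x + (-1/4:ℝ) * (g X (B*w)) * (u' X) * (Real.sqrt (E X)) * (Real.sqrt (F X)) * B * w^2 + (1/4:ℝ) * (g X (B*w)) * (u' X) * (Real.sqrt (E X)) * (Real.sqrt (F X)) * B * x + (-1/4:ℝ) * (g X (B*w)) * (u X) * (Real.sqrt (E X))⁻¹ * (Real.sqrt (F X)) * B^2 * w^3 + (1/4:ℝ) * (g X (B*w)) * (u X) * (Real.sqrt (E X))⁻¹ * (Real.sqrt (F X)) * B^2 * x * w + (-1/4:ℝ) * (g X (B*w)) * (u X) * (Real.sqrt (E X)) * (Real.sqrt (F X)) * B^2 * w^3 + (1/4:ℝ) * (g X (B*w)) * (u X) * (Real.sqrt (E X)) *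 (Real.sqrt (F X)) * B^2 * x * w + (-1/4:ℝ) * (g X (B*w)) * (u X)^2 * (Real.sqrt (E X))⁻¹ * (Real.sqrt (F X)) * B * w^2 + (1/2:ℝ) * (g X (B*w)) * (u X)^2 * (Real.sqrt (E X))⁻¹ * (Real.sqrt (F X)) * B * x + (-1/4:ℝ) * (g X (B*w)) * (u X)^2 * (Real.sqrt (E X))⁻¹ * (Real.sqrt (F X))^2 * (Real.sqrt (F X))⁻¹ * B * x + (1/4:ℝ) * (g X (B*w)) * (u X)^2 * (Real.sqrt (E X)) * (Real.sqrt (F X)) * B * w^2 + (-1/2:ℝ) * (g X (B*w)) * (u X)^2 * (Real.sqrt (E X)) * (Real.sqrt (F X)) * B * x + (1/4:ℝ) * (g X (B*w)) * (u X)^2 * (Real.sqrt (E X)) * (Real.sqrt (F X))^2 * (Real.sqrt (F X))⁻¹ * B * x + (1/4:ℝ) * (f X (B*w)) * (u' X) * (Real.sqrt (E X))⁻¹ * (Real.sqrt (F X)) * B * w^2 + (-1/4:ℝ) * (f X (B*w)) * (u' X) * (Real.sqrt (E X))⁻¹ * (Real.sqrt (F X)) * B * x + (-1/4:ℝ) *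 (f X (B*w)) * (u' X) * (Real.sqrt (E X)) * (Real.sqrt (F X)) * B * w^2 + (1/4:ℝ) * (f X (B*w)) * (u' X) * (Real.sqrt (E X)) * (Real.sqrt (F X)) * B * x + (-1/4:ℝ) * (f X (B*w)) * (u X) * (Real.sqrt (E X))⁻¹ * (Real.sqrt (F X)) * B^2 * w^3 + (1/4:ℝ) * (f X (B*w)) * (u X) * (Real.sqrt (E X))⁻¹ * (Real.sqrt (F X)) * B^2 * x * w + (1/4:ℝ) * (f X (B*w)) * (u X) * (Real.sqrt (E X)) * (Real.sqrt (F X)) * B^2 * w^3 + (-1/4:ℝ) * (f X (B*w)) * (u X) * (Real.sqrt (E X)) * (Real.sqrt (F X)) * B^2 * x * w + (1/4:ℝ) * (f X (B*w)) * (u X)^2 * (Real.sqrt (E X))⁻¹ * (Real.sqrt (F X)) * B * w^2 + (-1/4:ℝ) * (f X (B*w)) * (u X)^2 * (Real.sqrt (E X))⁻¹ * (Real.sqrt (F X))^2 * (Real.sqrt (F X))⁻¹ * B * x + (1/4:ℝ) * (f X (B*w)) * (u X)^2 * (Real.sqrt (E X)) * (Real.sqrt (F X)) * B * w^2 + (-1/4:ℝ)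 * (f X (B*w)) * (u X)^2 * (Real.sqrt (E X)) * (Real.sqrt (F X))^2 * (Real.sqrt (F X))⁻¹ * B * x) * hB3 + ((-1:ℝ) * (g X (B*w)) * (Real.sqrt (E X))⁻¹ * (Real.sqrt (F X)) * w + (1/4:ℝ) * (g X (B*w)) * (u X) * (Real.sqrt (E X))⁻¹ * (Real.sqrt (F X)) * B^2 + (-1/4:ℝ) * (g X (B*w)) * (u X) * (Real.sqrt (E X)) * (Real.sqrt (F X)) * B^2 + (-1/4:ℝ) * (g X (B*w)) * (u X) * (Real.sqrt (E X)) * (Real.sqrt (E X))⁻¹^2 * (Real.sqrt (F X)) * B^2 + (1/4:ℝ) * (f X (B*w)) * (u X) * (Real.sqrt (E X))⁻¹ * (Real.sqrt (F X)) * B^2 + (1/4:ℝ) * (f X (B*w)) * (u X) * (Real.sqrt (E X)) * (Real.sqrt (F X)) * B^2 + (-1/4:ℝ) * (f X (B*w)) * (u X) * (Real.sqrt (E X)) * (Real.sqrt (E X))⁻¹^2 * (Real.sqrt (F X)) * B^2) * hinvE + ((1/4:ℝ) * (g X (B*w)) * (u' X)^2 * (Real.sqrt (E X))⁻¹ * (Real.sqrt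 (F X)) * B^2 + (-1/4:ℝ) * (g X (B*w)) * (u' X)^2 * (Real.sqrt (E X)) * (Real.sqrt (F X)) * B^2 + (-1/2:ℝ) * (g X (B*w)) * (u X)^2 * (Real.sqrt (E X))⁻¹ * (Real.sqrt (F X)) * B * x + (1/2:ℝ) * (g X (B*w)) * (u X)^2 * (Real.sqrt (E X)) * (Real.sqrt (F X)) * B * x + (-1/4:ℝ) * (g X (B*w)) * (u X)^4 * (Real.sqrt (E X))⁻¹ * (Real.sqrt (F X)) * B^2 + (1/4:ℝ) * (g X (B*w)) * (u X)^4 * (Real.sqrt (E X)) * (Real.sqrt (F X)) * B^2 + (1/4:ℝ) * (f X (B*w)) * (u' X)^2 * (Real.sqrt (E X))⁻¹ * (Real.sqrt (F X)) * B^2 + (1/4:ℝ) * (f X (B*w)) * (u' X)^2 * (Real.sqrt (E X)) * (Real.sqrt (F X)) * B^2 + (-1/2:ℝ) * (f X (B*w)) * (u X)^2 * (Real.sqrt (E X))⁻¹ * (Real.sqrt (F X)) * B * x + (-1/2:ℝ) * (f X (B*w)) * (u X)^2 * (Real.sqrt (E X)) * (Real.sqrt (F X)) * B * x + (-1/4:ℝ)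 * (f X (B*w)) * (u X)^4 * (Real.sqrt (E X))⁻¹ * (Real.sqrt (F X)) * B^2 + (-1/4:ℝ) * (f X (B*w)) * (u X)^4 * (Real.sqrt (E X)) * (Real.sqrt (F X)) * B^2) * hinvF
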